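/- Let m ≥ 1, let V = ℝ^{m+1} with its standard inner product and unit sphere S(V), and let f₁, …, f_m : S(V) → ℝ be continuous functions with fᵢ(−v) = −fᵢ(v) for all v ∈ S(V). Set Ω = { v ∈ S(V) : |fᵢ(v)| < 1 for all i }. Suppose there exists a linear subspace U ⊆ V of dimension m (a hyperplane through the origin) such that for every unit vector u ∈ U there is some i with |fᵢ(u)| ≥ 1. Then Ω can be written as a disjoint union Ω = Ω₊ ⊔ Ω₋ of two open subsets of S(V) with Ω₋ = −Ω₊; indeed, for any unit vector w in the orthogonal complement of U, the sets Ω₊ = { v ∈ Ω : ⟨v, w⟩ > 0 } and Ω₋ = { v ∈ Ω : ⟨v, w⟩ < 0 } have these properties. -/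
import Mathlib

open Metric
open scoped RealInnerProductSpace

theorem omega_splits_of_hyperplane (m : ℕ) (hm : 1 ≤ m)
    (f : Fin m → sphere (0 : EuclideanSpace ℝ (Fin (m + 1))) 1 → ℝ)
    (hf_cont : ∀ i, Continuous (f i))
    (hf_odd : ∀ i v, f i (-v) = -(f i v))
    (U : Submodule ℝ (EuclideanSpace ℝ (Fin (m + 1))))
    (hU : Module.finrank ℝ U = m)
    (hsep : ∀ (u : EuclideanSpace ℝ (Fin (m + 1))) (hu : u ∈ U) (hu1 : ‖u‖ = 1),
      ∃ i, 1 ≤ |f i ⟨u, mem_sphere_zero_iff_norm.mpr hu1⟩|) :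
    (∃ Ωp Ωn : Set (sphere (0 : EuclideanSpace ℝ (Fin (m + 1))) 1),
      IsOpen Ωp ∧ IsOpen Ωn ∧ Disjoint Ωp Ωn ∧
      Ωp ∪ Ωn = {v : sphere (0 : EuclideanSpace ℝ (Fin (m + 1))) 1 | ∀ i, |f i v| < 1} ∧
      Ωn = (fun v => -v) '' Ωp) ∧
    ∀ w : EuclideanSpace ℝ (Fin (m + 1)), w ∈ Uᗮ → ‖w‖ = 1 →
      (IsOpen {v : sphere (0 : EuclideanSpace ℝ (Fin (m + 1))) 1 |
          (∀ i, |f i v| < 1) ∧ 0 < ⟪(v : EuclideanSpace ℝ (Fin (m + 1))), w⟫} ∧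
       IsOpen {v : sphere (0 : EuclideanSpace ℝ (Fin (m + 1))) 1 |
          (∀ i, |f i v| < 1) ∧ ⟪(v : EuclideanSpace ℝ (Fin (m + 1))), w⟫ < 0} ∧
       Disjoint {v : sphere (0 : EuclideanSpace ℝ (Fin (m + 1))) 1 |
          (∀ i, |f i v| < 1) ∧ 0 < ⟪(v : EuclideanSpace ℝ (Fin (m + 1))), w⟫}
        {v : sphere (0 : EuclideanSpace ℝ (Fin (m + 1))) 1 |
          (∀ i, |f i v| < 1) ∧ ⟪(v : EuclideanSpace ℝ (Fin (m + 1))), w⟫ < 0} ∧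
       {v : sphere (0 : EuclideanSpace ℝ (Fin (m + 1))) 1 |
          (∀ i, |f i v| < 1) ∧ 0 < ⟪(v : EuclideanSpace ℝ (Fin (m + 1))), w⟫} ∪
        {v : sphere (0 : EuclideanSpace ℝ (Fin (m + 1))) 1 |
          (∀ i, |f i v| < 1) ∧ ⟪(v : EuclideanSpace ℝ (Fin (m + 1))), w⟫ < 0} =
        {v : sphere (0 : EuclideanSpace ℝ (Fin (m + 1))) 1 | ∀ i, |f i v| < 1} ∧
       {v : sphere (0 : EuclideanSpace ℝ (Fin (m + 1))) 1 |
          (∀ i, |f i v| < 1) ∧ ⟪(v : EuclideanSpace ℝ (Fin (m + 1))), w⟫ < 0} =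
        (fun v => -v) '' {v : sphere (0 : EuclideanSpace ℝ (Fin (m + 1))) 1 |
          (∀ i, |f i v| < 1) ∧ 0 < ⟪(v : EuclideanSpace ℝ (Fin (m + 1))), w⟫}) := by
  have horth : Module.finrank ℝ (Uᗮ : Submodule ℝ (EuclideanSpace ℝ (Fin (m+1)))) = 1 := by
    have h := Submodule.finrank_add_finrank_orthogonal (K := U)
    have hfin : Module.finrank ℝ (EuclideanSpace ℝ (Fin (m + 1))) = m + 1 :=
      finrank_euclideanSpace_fin
    rw [hU, hfin] at h
    omega
  set V := EuclideanSpace ℝ (Fin (m + 1))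
  -- key: the statement for each w
  have key : ∀ w : V, w ∈ Uᗮ → ‖w‖ = 1 →
      (IsOpen {v : sphere (0 : V) 1 | (∀ i, |f i v| < 1) ∧ 0 < ⟪(v : V), w⟫} ∧
       IsOpen {v : sphere (0 : V) 1 | (∀ i, |f i v| < 1) ∧ ⟪(v : V), w⟫ < 0} ∧
       Disjoint {v : sphere (0 : V) 1 | (∀ i, |f i v| < 1) ∧ 0 < ⟪(v : V), w⟫}
        {v : sphere (0 : V) 1 | (∀ i, |f i v| < 1) ∧ ⟪(v : V), w⟫ < 0} ∧
       {v : sphere (0 : V) 1 | (∀ i, |f i v| < 1) ∧ 0 < ⟪(v : V), w⟫} ∪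
        {v : sphere (0 : V) 1 | (∀ i, |f i v| < 1) ∧ ⟪(v : V), w⟫ < 0} =
        {v : sphere (0 : V) 1 | ∀ i, |f i v| < 1} ∧
       {v : sphere (0 : V) 1 | (∀ i, |f i v| < 1) ∧ ⟪(v : V), w⟫ < 0} =
        (fun v => -v) '' {v : sphere (0 : V) 1 | (∀ i, |f i v| < 1) ∧ 0 < ⟪(v : V), w⟫}) := by
    intro w hw hw1
    have hw0 : w ≠ 0 := by intro h; rw [h, norm_zero] at hw1; norm_num at hw1
    have hspan : (ℝ ∙ w) = Uᗮ := by
      apply Submodule.eq_of_le_of_finrank_eq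
      · exact (Submodule.span_singleton_le_iff_mem _ _).mpr hw
      · rw [finrank_span_singleton hw0, horth]
    have hperp : ∀ v : V, ⟪v, w⟫ = 0 → v ∈ U := by
      intro v hv
      have : v ∈ Uᗮᗮ := by
        rw [Submodule.mem_orthogonal]
        intro u hu
        rw [← hspan, Submodule.mem_span_singleton] at hu
        obtain ⟨c, rfl⟩ := hu
        rw [real_inner_smul_left, real_inner_comm, hv, mul_zero]
      rwa [Submodule.orthogonal_orthogonal] at this
    have hΩopen : IsOpen {v : sphere (0 : V) 1 | ∀ i, |f i v| < 1} := by
      have : {v : sphere (0 : V) 1 | ∀ i, |f i v| < 1} =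
          ⋂ i, {v | |f i v| < 1} := by ext v; simp [Set.mem_iInter]
      rw [this]
      exact isOpen_iInter_of_finite fun i =>
        isOpen_lt ((hf_cont i).abs) continuous_const
    have hinner : Continuous fun v : sphere (0 : V) 1 => ⟪(v : V), w⟫ :=
      Continuous.inner continuous_subtype_val continuous_const
    refine ⟨hΩopen.inter (isOpen_lt continuous_const hinner),
            hΩopen.inter (isOpen_lt hinner continuous_const), ?_, ?_, ?_⟩
    · rw [Set.disjoint_left]
      rintro v ⟨-, h1⟩ ⟨-, h2⟩
      exact absurd (h2.trans h1) (lt_irrefl _)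
    · ext v
      simp only [Set.mem_union, Set.mem_setOf_eq]
      constructor
      · rintro (⟨h, -⟩ | ⟨h, -⟩) <;> exact h
      · intro h
        rcases lt_trichotomy ⟪(v : V), w⟫ 0 with hlt | heq | hgt
        · exact Or.inr ⟨h, hlt⟩
        · exfalso
          have hvU : (v : V) ∈ U := hperp _ heq
          have hv1 : ‖(v : V)‖ = 1 := mem_sphere_zero_iff_norm.mp v.2
          obtain ⟨i, hi⟩ := hsep (v : V) hvU hv1
          have : (⟨(v : V), mem_sphere_zero_iff_norm.mpr hv1⟩ :
              sphere (0 : V) 1) = v := Subtype.ext rfl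
          rw [this] at hi
          exact absurd (h i) (not_lt.mpr hi)
        · exact Or.inl ⟨h, hgt⟩
    · ext v
      simp only [Set.mem_image, Set.mem_setOf_eq]
      constructor
      · rintro ⟨h1, h2⟩
        refine ⟨-v, ⟨fun i => ?_, ?_⟩, neg_neg v⟩
        · rw [hf_odd, abs_neg]; exact h1 i
        · have : ((-v : sphere (0 : V) 1) : V) = -(v : V) := rfl
          rw [this, inner_neg_left]
          linarith
      · rintro ⟨u, ⟨h1, h2⟩, rfl⟩
        constructor
        · intro i; rw [hf_odd, abs_neg]; exact h1 i
        · have : ((-u : sphere (0 : V) 1) : V) = -(u : V) := rfl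
          rw [this, inner_neg_left]
          linarith
  refine ⟨?_, key⟩
  -- pick a unit w in Uᗮ
  obtain ⟨x, hx, hx0⟩ : ∃ x ∈ Uᗮ, x ≠ 0 := by
    by_contra h
    push_neg at h
    have : (Uᗮ : Submodule ℝ V) = ⊥ := by
      rw [Submodule.eq_bot_iff]; exact h
    rw [this, finrank_bot] at horth
    omega
  set w := ‖x‖⁻¹ • x with hwdef
  have hxnorm : ‖x‖ ≠ 0 := norm_ne_zero_iff.mpr hx0
  have hw : w ∈ Uᗮ := Submodule.smul_mem _ _ hx
  have hw1 : ‖w‖ = 1 := by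
    rw [hwdef, norm_smul, norm_inv, norm_norm, inv_mul_cancel₀ hxnorm]
  obtain ⟨h1, h2, h3, h4, h5⟩ := key w hw hw1
  exact ⟨_, _, h1, h2, h3, h4, h5⟩
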